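/- Let Ω ⊂ ℝ^N be a bounded open set, let U ⊂ ℝ^N be an open set containing the closure of Ω, and let u ∈ C¹(U) be such that ∇u(x) ≠ 0 for every x in the closure of Ω with u(x) = 0. Then for every s ∈ (0,1) and every p with 1 ≤ p < 1/s, the function x ↦ |u(x)|^{−sp} is integrable on Ω, i.e. ∫_Ω |u(x)|^{−sp} dx < ∞ (the zero set of u in Ω has Lebesgue measure zero, so the integrand is defined almost everywhere). -/

import Mathlib

open MeasureTheory Set
open scoped RealInnerProductSpace ENNReal

set_option maxHeartbeats 1000000


lemma aux_int1d {r : ℝ} (hr : -1 < r) (R : ℝ) :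
    IntegrableOn (fun t : ℝ => |t| ^ r) (Icc (-R) R) := by
  set T : ℝ := |R| + 1 with hTdef
  have hT0 : (0 : ℝ) < T := by positivity
  have h₁ : IntegrableOn (fun t : ℝ => |t| ^ r) (Ioo 0 T) := by
    refine ((intervalIntegral.integrableOn_Ioo_rpow_iff hT0).2 hr).congr_fun (fun t ht => ?_) measurableSet_Ioo
    rw [abs_of_pos ht.1]
  have h₂ : IntegrableOn (fun t : ℝ => |t| ^ r) (Ioo (-T) 0) := by
    have h := (MeasurePreserving.integrableOn_comp_preimage
      (Measure.measurePreserving_neg (volume : Measure ℝ))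
      (Homeomorph.neg ℝ).measurableEmbedding).2 h₁
    have hset : (fun x : ℝ => -x) ⁻¹' (Ioo 0 T) = Ioo (-T) 0 := by
      ext x; simp [neg_lt, lt_neg, and_comm]
    have hfun : ((fun t : ℝ => |t| ^ r) ∘ (fun x : ℝ => -x)) = fun t : ℝ => |t| ^ r := by
      funext t; simp [Function.comp, abs_neg]
    rwa [hset, hfun] at h
  have h₃ : IntegrableOn (fun t : ℝ => |t| ^ r) {(0 : ℝ)} := by
    rw [integrableOn_singleton_iff]
    exact Or.inr (by simp)
  have hsub : Icc (-R) R ⊆ Ioo (-T) 0 ∪ ({0} ∪ Ioo 0 T) := by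
    intro t ht
    have h1 : |t| < T := by
      have h2 := le_abs_self R
      have h3 := neg_abs_le R
      have habs : |t| ≤ |R| := abs_le.2 ⟨by linarith [ht.1], by linarith [ht.2]⟩
      linarith
    rcases lt_trichotomy t 0 with h | h | h
    · exact Or.inl ⟨by cases abs_lt.1 h1; linarith, h⟩
    · exact Or.inr (Or.inl (by simp [h]))
    · exact Or.inr (Or.inr ⟨h, by cases abs_lt.1 h1; linarith⟩)
  exact ((h₂.union (h₃.union h₁)).mono_set hsub)



lemma aux_coord {N : ℕ} (i₀ : Fin N) {r : ℝ} (hr : -1 < r) (R : ℝ) :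
    IntegrableOn (fun w : EuclideanSpace ℝ (Fin N) => |w i₀| ^ r)
      (Metric.closedBall 0 R) := by
  classical
  set I : Set ℝ := Icc (-R) R with hI
  set f : Fin N → ℝ → ℝ := fun i t =>
    if i = i₀ then I.indicator (fun t => |t| ^ r) t else I.indicator 1 t with hf
  have hfint : ∀ i, Integrable (f i) := by
    intro i
    by_cases hi : i = i₀
    · simpa only [hf, hi, if_pos rfl, if_true] using
        (integrable_indicator_iff measurableSet_Icc).2 (aux_int1d hr R)
    · simpa only [hf, if_neg hi, Pi.one_def] using
        (integrable_indicator_iff measurableSet_Icc).2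
          (integrableOn_const (C := (1:ℝ)) measure_Icc_lt_top.ne)
  have hprod : Integrable (fun z : Fin N → ℝ => ∏ i, f i (z i)) :=
    Integrable.fintype_prod hfint
  have heq : (fun z : Fin N → ℝ => ∏ i, f i (z i)) =
      (univ.pi fun _ => I).indicator (fun z => |z i₀| ^ r) := by
    funext z
    by_cases hz : z ∈ univ.pi fun _ => I
    · rw [indicator_of_mem hz]
      have hstep : ∀ i, f i (z i) = if i = i₀ then |z i| ^ r else 1 := by
        intro i
        have hzi : z i ∈ I := hz i (mem_univ i)
        by_cases hi : i = i₀
        · subst hi; simp [hf, indicator_of_mem hzi]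
        · simp [hf, hi, indicator_of_mem hzi]
      simp_rw [hstep]
      simpa using Finset.prod_ite_eq' Finset.univ i₀ (fun i => |z i| ^ r)
    · rw [indicator_of_notMem hz]
      have : ∃ i, z i ∉ I := by
        by_contra h
        push_neg at h
        exact hz (fun i _ => h i)
      obtain ⟨i, hi⟩ := this
      refine Finset.prod_eq_zero (Finset.mem_univ i) ?_
      by_cases hii : i = i₀
      · simp [hf, hii, indicator_of_notMem (hii ▸ hi)]
      · simp [hf, hii, indicator_of_notMem hi]
  rw [heq] at hprod
  have hbox : IntegrableOn (fun z : Fin N → ℝ => |z i₀| ^ r) (univ.pi fun _ => I) :=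
    (integrable_indicator_iff (MeasurableSet.univ_pi fun _ => measurableSet_Icc)).1 hprod
  have hmp := EuclideanSpace.volume_preserving_symm_measurableEquiv_toLp (Fin N)
  have h2 := (MeasurePreserving.integrableOn_comp_preimage hmp
    (MeasurableEquiv.toLp 2 (Fin N → ℝ)).symm.measurableEmbedding).2 hbox
  have hsub : Metric.closedBall (0 : EuclideanSpace ℝ (Fin N)) R ⊆
      (MeasurableEquiv.toLp 2 (Fin N → ℝ)).symm ⁻¹' (univ.pi fun _ => I) := by
    intro w hw
    have hnorm : ‖w‖ ≤ R := by simpa using Metric.mem_closedBall.1 hw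
    intro i _
    have hcoord : |w i| ≤ ‖w‖ := by
      have h := abs_real_inner_le_norm (EuclideanSpace.single i (1 : ℝ)) w
      simpa [EuclideanSpace.inner_single_left, EuclideanSpace.norm_single] using h
    have hwi : ((MeasurableEquiv.toLp 2 (Fin N → ℝ)).symm w) i = w i := rfl
    rw [hwi]
    exact ⟨by linarith [(abs_le.1 (hcoord.trans hnorm)).1],
      by linarith [(abs_le.1 (hcoord.trans hnorm)).2]⟩
  have hfun : ((fun z : Fin N → ℝ => |z i₀| ^ r) ∘ (MeasurableEquiv.toLp 2 (Fin N → ℝ)).symm) =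
      fun w : EuclideanSpace ℝ (Fin N) => |w i₀| ^ r := rfl
  rw [hfun] at h2
  exact h2.mono_set hsub

lemma aux_inner {N : ℕ} (e : EuclideanSpace ℝ (Fin N)) (he : ‖e‖ = 1) {r : ℝ}
    (hr : -1 < r) (R : ℝ) :
    IntegrableOn (fun y : EuclideanSpace ℝ (Fin N) => |⟪e, y⟫| ^ r)
      (Metric.closedBall 0 R) := by
  classical
  have hN : 0 < N := by
    rcases Nat.eq_zero_or_pos N with h | h
    · exfalso
      subst h
      have : e = 0 := Subsingleton.elim e 0
      rw [this, norm_zero] at he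
      norm_num at he
    · exact h
  set i₀ : Fin N := ⟨0, hN⟩
  have horth : Orthonormal ℝ (({i₀} : Set (Fin N)).restrict fun _ => e) := by
    constructor
    · intro i
      exact he
    · intro i j hij
      exact absurd (Subtype.ext ((i.2.trans j.2.symm : (i : Fin N) = j))) hij
  obtain ⟨b, hb⟩ := horth.exists_orthonormalBasis_extension_of_card_eq
    (by simp [finrank_euclideanSpace_fin]) 
  have hbe : b i₀ = e := hb i₀ rfl
  have hrepr : ∀ y : EuclideanSpace ℝ (Fin N), ⟪e, y⟫ = b.repr y i₀ := by
    intro y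
    rw [b.repr_apply_apply, hbe]
  have hcoord := aux_coord i₀ hr R
  have h2 := (MeasurePreserving.integrableOn_comp_preimage
    (b.measurePreserving_measurableEquiv)
    (b.measurableEquiv).measurableEmbedding).2 hcoord
  have hfun : ((fun w : EuclideanSpace ℝ (Fin N) => |w i₀| ^ r) ∘ b.measurableEquiv) =
      fun y : EuclideanSpace ℝ (Fin N) => |⟪e, y⟫| ^ r := by
    funext y
    simp only [Function.comp_apply]
    congr 2
    exact (hrepr y).symm
  rw [hfun] at h2
  refine h2.mono_set ?_
  intro y hy
  simp only [mem_preimage, Metric.mem_closedBall] at *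
  have : b.measurableEquiv y = b.repr y := rfl
  rw [this]
  simpa [b.repr.norm_map] using hy


set_option maxHeartbeats 1000000


lemma aux_meas (r : ℝ) : Measurable fun t : ℝ => |t| ^ r := by measurability

lemma aux_local {N : ℕ} (Ω U : Set (EuclideanSpace ℝ (Fin N)))
    (hΩo : IsOpen Ω) (hUo : IsOpen U) (hΩU : closure Ω ⊆ U)
    (u : EuclideanSpace ℝ (Fin N) → ℝ) (hu : ContDiffOn ℝ 1 u U)
    (hnd : ∀ x ∈ closure Ω, u x = 0 → gradient u x ≠ 0)
    (x₀ : EuclideanSpace ℝ (Fin N)) :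
    ∃ V : Set (EuclideanSpace ℝ (Fin N)), IsOpen V ∧ x₀ ∈ V ∧
      (x₀ ∈ closure Ω →
        volume {x ∈ Ω ∩ V | u x = 0} = 0 ∧
        ∀ r : ℝ, -1 < r → r < 0 → IntegrableOn (fun x => |u x| ^ r) (Ω ∩ V)) := by
  classical
  by_cases hx₀ : x₀ ∈ closure Ω
  swap
  · exact ⟨univ, isOpen_univ, mem_univ _, fun h => absurd h hx₀⟩
  have hx₀U : x₀ ∈ U := hΩU hx₀
  have hcont : ContinuousOn u U := hu.continuousOn
  by_cases hu0 : u x₀ = 0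
  · -- Case B : u x₀ = 0, gradient nonzero
    have ha : gradient u x₀ ≠ 0 := hnd x₀ hx₀ hu0
    set a := gradient u x₀ with hadef
    set c : ℝ := ‖a‖ with hcdef
    have hc : 0 < c := norm_pos_iff.2 ha
    set e := c⁻¹ • a with hedef
    have he : ‖e‖ = 1 := by
      rw [hedef, norm_smul, norm_inv, Real.norm_eq_abs, abs_of_pos hc, ← hcdef]
      field_simp
    have hee : ⟪e, e⟫ = 1 := by
      have := real_inner_self_eq_norm_sq e
      rw [he] at this; simpa using this
    have hudiff : ∀ x ∈ U, HasFDerivAt u (fderiv ℝ u x) x := fun x hx =>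
      ((hu.differentiableOn one_ne_zero).differentiableAt (hUo.mem_nhds hx)).hasFDerivAt
    have hfda : ∀ w, fderiv ℝ u x₀ w = ⟪a, w⟫ := by
      intro w
      have h1 : a = (InnerProductSpace.toDual ℝ _).symm (fderiv ℝ u x₀) := rfl
      rw [h1, InnerProductSpace.toDual_symm_apply]
    set F : EuclideanSpace ℝ (Fin N) → EuclideanSpace ℝ (Fin N) :=
      fun x => x + (c⁻¹ * u x - ⟪e, x⟫) • e with hFdef
    have hinnerF : ∀ x, ⟪e, F x⟫ = c⁻¹ * u x := by
      intro x
      simp only [hFdef, inner_add_right, real_inner_smul_right, hee]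
      ring
    have huF : ∀ x, c * ⟪e, F x⟫ = u x := by
      intro x; rw [hinnerF]; field_simp
    have hFc1 : ContDiffOn ℝ 1 F U := by
      refine ContDiffOn.add contDiffOn_id (ContDiffOn.smul (f := fun x => c⁻¹ * u x - ⟪e, x⟫) ?_ contDiffOn_const)
      refine ContDiffOn.sub ?_ (((innerSL ℝ e).contDiff).contDiffOn.congr ?_)
      · have h := hu.const_smul c⁻¹
        refine h.congr fun x _ => ?_
        simp [smul_eq_mul]
      · intro x _; rw [innerSL_apply_apply]
    have hF'x : ∀ x ∈ U, HasFDerivAt F (ContinuousLinearMap.id ℝ _ +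
        (c⁻¹ • fderiv ℝ u x - innerSL ℝ e).smulRight e) x := by
      intro x hx
      have h1 : HasFDerivAt (fun y => c⁻¹ * u y) (c⁻¹ • fderiv ℝ u x) x := by
        simpa [smul_smul] using (hudiff x hx).const_mul c⁻¹
      have h2 : HasFDerivAt (fun y : EuclideanSpace ℝ (Fin N) => ⟪e, y⟫)
          (innerSL ℝ e) x := (innerSL ℝ e).hasFDerivAt
      exact (hasFDerivAt_id x).add ((h1.sub h2).smul_const e)
    have hF'zero : (c⁻¹ • fderiv ℝ u x₀ - innerSL ℝ e) = 0 := by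
      ext w
      simp only [ContinuousLinearMap.coe_sub', Pi.sub_apply,
        ContinuousLinearMap.coe_smul', Pi.smul_apply, smul_eq_mul, innerSL_apply_apply,
        ContinuousLinearMap.zero_apply, hfda w, hedef, real_inner_smul_left]
      ring
    have hFid : HasFDerivAt F (ContinuousLinearMap.id ℝ _) x₀ := by
      have h := hF'x x₀ hx₀U
      have hzero : (0 : EuclideanSpace ℝ (Fin N) →L[ℝ] ℝ).smulRight e = 0 := by
        ext w; simp
      rw [hF'zero, hzero, add_zero] at h
      exact h
    have hfderivF : ∀ x ∈ U, HasFDerivAt F (fderiv ℝ F x) x := fun x hx =>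
      ((hFc1.differentiableOn one_ne_zero).differentiableAt (hUo.mem_nhds hx)).hasFDerivAt
    have hfdx₀ : fderiv ℝ F x₀ = ContinuousLinearMap.id ℝ _ := hFid.fderiv
    have hF'cont : ContinuousOn (fderiv ℝ F) U := hFc1.continuousOn_fderiv_of_isOpen hUo le_rfl
    set W := U ∩ (fderiv ℝ F) ⁻¹'
      {L : EuclideanSpace ℝ (Fin N) →L[ℝ] EuclideanSpace ℝ (Fin N) |
        ‖L - ContinuousLinearMap.id ℝ _‖ < 1/2 ∧ 1/2 < |L.det|} with hWdef
    have hWo : IsOpen W := by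
      refine hF'cont.isOpen_inter_preimage hUo ?_
      exact (isOpen_lt (continuous_id.sub continuous_const).norm continuous_const).inter
        (isOpen_lt continuous_const ContinuousLinearMap.continuous_det.abs)
    have hx₀W : x₀ ∈ W := by
      refine ⟨hx₀U, ?_⟩
      simp only [mem_preimage, mem_setOf_eq, hfdx₀, sub_self, norm_zero]
      constructor
      · norm_num
      · have : (ContinuousLinearMap.id ℝ (EuclideanSpace ℝ (Fin N))).det = 1 := by
          simp [ContinuousLinearMap.det]
        rw [this]; norm_num
    obtain ⟨ρ, hρ0, hρW⟩ : ∃ ρ > 0, Metric.closedBall x₀ ρ ⊆ W := by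
      rcases Metric.isOpen_iff.1 hWo x₀ hx₀W with ⟨ρ', hρ'0, hsub⟩
      exact ⟨ρ'/2, by linarith, (Metric.closedBall_subset_ball (by linarith)).trans hsub⟩
    have hVW : Metric.ball x₀ ρ ⊆ W := Metric.ball_subset_closedBall.trans hρW
    have hVU : Metric.ball x₀ ρ ⊆ U := fun x hx => (hVW hx).1
    have hnormb : ∀ x ∈ Metric.ball x₀ ρ,
        ‖fderiv ℝ F x - ContinuousLinearMap.id ℝ _‖ ≤ 1/2 := fun x hx => ((hVW hx).2.1).le
    have hdet : ∀ x ∈ Metric.ball x₀ ρ, 1/2 ≤ |(fderiv ℝ F x).det| :=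
      fun x hx => ((hVW hx).2.2).le
    have hinj : InjOn F (Metric.ball x₀ ρ) := by
      intro x hxV y hyV hxy
      have hG : ∀ z ∈ Metric.ball x₀ ρ, HasFDerivWithinAt (fun w => F w - w)
          (fderiv ℝ F z - ContinuousLinearMap.id ℝ _) (Metric.ball x₀ ρ) z :=
        fun z hz => ((hfderivF z (hVU hz)).sub (hasFDerivAt_id z)).hasFDerivWithinAt
      have hle := (convex_ball x₀ ρ).norm_image_sub_le_of_norm_hasFDerivWithin_le hG
        hnormb hxV hyV
      have hkey : ‖(F y - y) - (F x - x)‖ = ‖y - x‖ := by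
        rw [hxy]
        have : F y - y - (F y - x) = x - y := by abel
        rw [this, norm_sub_rev]
      rw [hkey] at hle
      have h0 : ‖y - x‖ = 0 := by nlinarith [norm_nonneg (y - x)]
      have := norm_sub_eq_zero_iff.1 h0
      exact this.symm ▸ rfl
    -- bounded image
    have hKU : Metric.closedBall x₀ ρ ⊆ U := fun x hx => (hρW hx).1
    have hFK : IsCompact (F '' Metric.closedBall x₀ ρ) :=
      (isCompact_closedBall x₀ ρ).image_of_continuousOn (hFc1.continuousOn.mono hKU)
    obtain ⟨R, hR⟩ := hFK.isBounded.subset_closedBall 0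
    -- null set
    set Z := {x ∈ Metric.ball x₀ ρ | u x = 0} with hZdef
    have hZV : Z ⊆ Metric.ball x₀ ρ := fun x hx => hx.1
    have hZeq : Z = Metric.ball x₀ ρ ∩ closure Z := by
      apply Subset.antisymm
      · exact fun x hx => ⟨hx.1, subset_closure hx⟩
      · rintro x ⟨hxV, hxcl⟩
        refine ⟨hxV, ?_⟩
        have hcx : ContinuousWithinAt u Z x :=
          ((hcont.continuousAt (hUo.mem_nhds (hVU hxV)))).continuousWithinAt
        have hmem : u x ∈ closure (u '' Z) := hcx.mem_closure_image hxcl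
        have himg : u '' Z ⊆ {0} := by rintro t ⟨z, hz, rfl⟩; exact hz.2
        have := closure_minimal himg isClosed_singleton hmem
        simpa using this
    have hZmeas : MeasurableSet Z := by
      rw [hZeq]
      exact Metric.isOpen_ball.measurableSet.inter isClosed_closure.measurableSet
    have hf'Z : ∀ x ∈ Z, HasFDerivWithinAt F (fderiv ℝ F x) Z x :=
      fun x hx => (hfderivF x (hVU hx.1)).hasFDerivWithinAt
    have hFZnull : volume (F '' Z) = 0 := by
      set K : Submodule ℝ (EuclideanSpace ℝ (Fin N)) := LinearMap.ker ((innerSL ℝ e : EuclideanSpace ℝ (Fin N) →L[ℝ] ℝ) : EuclideanSpace ℝ (Fin N) →ₗ[ℝ] ℝ) with hKdef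
      have hKtop : K ≠ ⊤ := by
        intro htop
        have he' : e ∈ K := by rw [htop]; exact Submodule.mem_top
        have h0 : (⟪e, e⟫ : ℝ) = 0 := by
          have := LinearMap.mem_ker.1 he'
          simpa [innerSL_apply_apply] using this
        rw [hee] at h0; norm_num at h0
      have hsub : F '' Z ⊆ (K : Set (EuclideanSpace ℝ (Fin N))) := by
        rintro y ⟨x, hx, rfl⟩
        have h0 : ⟪e, F x⟫ = 0 := by rw [hinnerF, hx.2, mul_zero]
        show F x ∈ K
        rw [hKdef, LinearMap.mem_ker]
        simpa [innerSL_apply_apply] using h0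
      exact measure_mono_null hsub (Measure.addHaar_submodule volume K hKtop)
    have hZnull : volume Z = 0 := by
      have hchg := lintegral_image_eq_lintegral_abs_det_fderiv_mul volume hZmeas hf'Z
        (hinj.mono hZV) (fun _ => (1 : ℝ≥0∞))
      have hlhs : ∫⁻ y in F '' Z, (1:ℝ≥0∞) ∂volume = 0 := by
        rw [setLIntegral_one, hFZnull]
      have hge : ENNReal.ofReal (1/2) * volume Z ≤
          ∫⁻ x in Z, ENNReal.ofReal |(fderiv ℝ F x).det| * 1 ∂volume := by
        rw [← setLIntegral_const Z (ENNReal.ofReal (1/2))]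
        refine lintegral_mono_ae ?_
        filter_upwards [ae_restrict_mem hZmeas] with x hx
        rw [mul_one]
        exact ENNReal.ofReal_le_ofReal (hdet x (hZV hx))
      rw [← hchg, hlhs] at hge
      have h2 : ENNReal.ofReal (1/2) ≠ 0 := by simp
      have := le_antisymm hge zero_le
      rcases mul_eq_zero.1 this with h | h
      · exact absurd h h2
      · exact h
    refine ⟨Metric.ball x₀ ρ, Metric.isOpen_ball, Metric.mem_ball_self hρ0, fun _ => ⟨?_, ?_⟩⟩
    · refine measure_mono_null ?_ hZnull
      rintro x ⟨⟨hxΩ, hxV⟩, hx0⟩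
      exact ⟨hxV, hx0⟩
    · intro r hr1 hr0
      set S := Ω ∩ Metric.ball x₀ ρ with hSdef
      have hSmeas : MeasurableSet S := (hΩo.inter Metric.isOpen_ball).measurableSet
      have hSV : S ⊆ Metric.ball x₀ ρ := inter_subset_right
      have hf'S : ∀ x ∈ S, HasFDerivWithinAt F (fderiv ℝ F x) S x :=
        fun x hx => (hfderivF x (hVU hx.2)).hasFDerivWithinAt
      set g : EuclideanSpace ℝ (Fin N) → ℝ := fun y => |c * ⟪e, y⟫| ^ r with hgdef
      have hgint : IntegrableOn g (Metric.closedBall 0 R) := by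
        have hbase : IntegrableOn (fun y : EuclideanSpace ℝ (Fin N) => c ^ r * |⟪e, y⟫| ^ r)
            (Metric.closedBall 0 R) := (aux_inner e he hr1 R).const_mul (c ^ r)
        refine hbase.congr_fun (fun y _ => ?_) measurableSet_closedBall
        show c ^ r * |⟪e, y⟫| ^ r = |c * ⟪e, y⟫| ^ r
        rw [abs_mul, abs_of_pos hc, Real.mul_rpow hc.le (abs_nonneg _)]
      have hgFS : IntegrableOn g (F '' S) := by
        refine hgint.mono_set ?_
        refine (image_mono (f := F) (hSV.trans Metric.ball_subset_closedBall)).trans hR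
      have hrhs := (integrableOn_image_iff_integrableOn_abs_det_fderiv_smul volume hSmeas hf'S
        (hinj.mono hSV) g).1 hgFS
      have hgF : ∀ x, g (F x) = |u x| ^ r := by
        intro x
        show |c * ⟪e, F x⟫| ^ r = |u x| ^ r
        rw [huF x]
      have h2 : Integrable (fun x => 2 * (|(fderiv ℝ F x).det| • g (F x)))
          (volume.restrict S) := hrhs.const_mul 2
      refine h2.mono' ?_ ?_
      · have hum : AEMeasurable u (volume.restrict S) :=
          (hcont.mono (fun x hx => hVU hx.2)).aemeasurable hSmeas
        exact ((aux_meas r).comp_aemeasurable hum).aestronglyMeasurable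
      · filter_upwards [ae_restrict_mem hSmeas] with x hx
        rw [Real.norm_eq_abs, abs_of_nonneg (Real.rpow_nonneg (abs_nonneg _) r)]
        have h3 := hdet x (hSV hx)
        have h4 : 0 ≤ |u x| ^ r := Real.rpow_nonneg (abs_nonneg _) r
        rw [smul_eq_mul, hgF x]
        nlinarith
  · -- Case A : u x₀ ≠ 0
    have habs : 0 < |u x₀| := abs_pos.2 hu0
    set m : ℝ := |u x₀| / 2 with hm
    have hm0 : 0 < m := by rw [hm]; linarith
    have hWo : IsOpen (U ∩ u ⁻¹' {t : ℝ | m < |t|}) :=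
      hcont.isOpen_inter_preimage hUo (isOpen_lt continuous_const continuous_abs)
    have hx₀W : x₀ ∈ U ∩ u ⁻¹' {t : ℝ | m < |t|} := by
      refine ⟨hx₀U, ?_⟩
      simp only [mem_preimage, mem_setOf_eq, hm]
      linarith
    obtain ⟨ρ, hρ0, hρ⟩ := Metric.isOpen_iff.1 hWo x₀ hx₀W
    refine ⟨Metric.ball x₀ ρ, Metric.isOpen_ball, Metric.mem_ball_self hρ0, fun _ => ⟨?_, ?_⟩⟩
    · have : {x ∈ Ω ∩ Metric.ball x₀ ρ | u x = 0} = ∅ := by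
        rw [eq_empty_iff_forall_notMem]
        rintro x ⟨⟨-, hxV⟩, hx0⟩
        have h5 : m < |u x| := (hρ hxV).2
        rw [hx0] at h5
        simp at h5
        linarith
      rw [this, measure_empty]
    · intro r hr1 hr0
      have hmeas : MeasurableSet (Ω ∩ Metric.ball x₀ ρ) :=
        (hΩo.inter Metric.isOpen_ball).measurableSet
      have hsubU : Ω ∩ Metric.ball x₀ ρ ⊆ U := fun x hx => (hρ hx.2).1
      constructor
      · have hum : AEMeasurable u (volume.restrict (Ω ∩ Metric.ball x₀ ρ)) :=
          (hcont.mono hsubU).aemeasurable hmeas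
        exact ((aux_meas r).comp_aemeasurable hum).aestronglyMeasurable
      · refine HasFiniteIntegral.restrict_of_bounded (C := m ^ r)
          ((measure_mono inter_subset_right).trans_lt measure_ball_lt_top) ?_
        filter_upwards [ae_restrict_mem hmeas] with x hx
        rw [Real.norm_eq_abs, abs_of_nonneg (Real.rpow_nonneg (abs_nonneg _) r)]
        have hmx : m < |u x| := (hρ hx.2).2
        exact Real.rpow_le_rpow_of_nonpos hm0 hmx.le hr0.le


/-- If `u ∈ C¹(U)` with `closure Ω ⊆ U` and `∇u ≠ 0` at every zero of `u` in
`closure Ω`, then for `s ∈ (0,1)` and `1 ≤ p < 1/s` the function `|u|^{-sp}` is integrable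
on `Ω` (the zero set of `u` in `Ω` being Lebesgue-null). -/
theorem statement9 {N : ℕ} (Ω U : Set (EuclideanSpace ℝ (Fin N)))
    (hΩo : IsOpen Ω) (hΩb : Bornology.IsBounded Ω)
    (hUo : IsOpen U) (hΩU : closure Ω ⊆ U)
    (u : EuclideanSpace ℝ (Fin N) → ℝ) (hu : ContDiffOn ℝ 1 u U)
    (hnd : ∀ x ∈ closure Ω, u x = 0 → gradient u x ≠ 0) :
    volume {x ∈ Ω | u x = 0} = 0 ∧
    ∀ s : ℝ, 0 < s → s < 1 → ∀ p : ℝ, 1 ≤ p → p < 1 / s →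
      IntegrableOn (fun x => |u x| ^ (-(s * p))) Ω := by
  classical
  have hK : IsCompact (closure Ω) :=
    Metric.isCompact_of_isClosed_isBounded isClosed_closure hΩb.closure
  choose V hVo hVmem hVprop using aux_local Ω U hΩo hUo hΩU u hu hnd
  obtain ⟨t, htcl, htcov⟩ := hK.elim_nhds_subcover V (fun x _ => (hVo x).mem_nhds (hVmem x))
  constructor
  · have hsub : {x ∈ Ω | u x = 0} ⊆ ⋃ y ∈ t, {x ∈ Ω ∩ V y | u x = 0} := by
      rintro x ⟨hxΩ, hx0⟩
      obtain ⟨y, hy, hxV⟩ := mem_iUnion₂.1 (htcov (subset_closure hxΩ))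
      exact mem_iUnion₂.2 ⟨y, hy, ⟨hxΩ, hxV⟩, hx0⟩
    refine measure_mono_null hsub (le_antisymm ?_ zero_le)
    refine (measure_biUnion_finset_le t _).trans ?_
    have hz : ∀ y ∈ t, volume {x ∈ Ω ∩ V y | u x = 0} = 0 :=
      fun y hy => (hVprop y (htcl y hy)).1
    rw [Finset.sum_congr rfl hz]
    simp
  · intro s hs0 hs1 p hp1 hps
    have hsp1 : s * p < 1 := by
      have h := (lt_div_iff₀ hs0).1 hps
      nlinarith
    have hr1 : (-1 : ℝ) < -(s * p) := by linarith
    have hr0 : -(s * p) < 0 := by nlinarith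
    have hΩsub : Ω ⊆ ⋃ y ∈ t, (Ω ∩ V y) := by
      intro x hx
      obtain ⟨y, hy, hxV⟩ := mem_iUnion₂.1 (htcov (subset_closure hx))
      exact mem_iUnion₂.2 ⟨y, hy, hx, hxV⟩
    refine IntegrableOn.mono_set ?_ hΩsub
    refine integrableOn_finset_iUnion.2 ?_
    intro y hy
    exact (hVprop y (htcl y hy)).2 (-(s * p)) hr1 hr0
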